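/- (Fagin–Kumar–Sivakumar) Let (X,d) be a b-metric space. Then d is Lipschitz equivalent to a metric — i.e. there exist a metric ρ on X and constants c₁, c₂ > 0 such that c₁·ρ(x,y) ≤ d(x,y) ≤ c₂·ρ(x,y) for all x,y ∈ X — if and only if d satisfies the s-relaxed polygonal inequality for some s ≥ 1. -/
import Mathlib


/-- **Fagin–Kumar–Sivakumar.** A b-metric `d` is Lipschitz equivalent to a metric
iff it satisfies the `s`-relaxed polygonal inequality for some `s ≥ 1`. -/
theorem lipschitz_equiv_metric_iff_relaxed_polygonal {X : Type*} [Nonempty X]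
    (d : X → X → ℝ) (s₀ : ℝ) (hs₀ : 1 ≤ s₀)
    (hnonneg : ∀ x y, 0 ≤ d x y)
    (heq : ∀ x y, d x y = 0 ↔ x = y)
    (hsymm : ∀ x y, d x y = d y x)
    (htri : ∀ x y z, d x y ≤ s₀ * (d x z + d z y)) :
    (∃ ρ : X → X → ℝ,
      (∀ x y, 0 ≤ ρ x y) ∧
      (∀ x y, ρ x y = 0 ↔ x = y) ∧
      (∀ x y, ρ x y = ρ y x) ∧
      (∀ x y z, ρ x y ≤ ρ x z + ρ z y) ∧
      (∃ c₁ > (0:ℝ), ∃ c₂ > (0:ℝ), ∀ x y, c₁ * ρ x y ≤ d x y ∧ d x y ≤ c₂ * ρ x y))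
    ↔
    (∃ s : ℝ, 1 ≤ s ∧ ∀ (n : ℕ), 1 ≤ n → ∀ x : ℕ → X,
      d (x 0) (x n) ≤ s * ∑ i ∈ Finset.range n, d (x i) (x (i + 1))) := by
  constructor
  · rintro ⟨ρ, hρ0, hρeq, hρs, hρtri, c₁, hc₁, c₂, hc₂, hle⟩
    refine ⟨max 1 (c₂ / c₁), le_max_left _ _, ?_⟩
    intro n hn x
    have h1 : ρ (x 0) (x n) ≤ ∑ i ∈ Finset.range n, ρ (x i) (x (i + 1)) := by
      clear hn
      induction n with
      | zero => simp [(hρeq (x 0) (x 0)).2 rfl]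
      | succ n ih =>
        rw [Finset.sum_range_succ]
        have := hρtri (x 0) (x (n + 1)) (x n)
        linarith
    have h2 : ∀ i, ρ (x i) (x (i + 1)) ≤ d (x i) (x (i + 1)) / c₁ := by
      intro i
      rw [le_div_iff₀ hc₁, mul_comm]
      exact (hle (x i) (x (i + 1))).1
    have h3 : ∑ i ∈ Finset.range n, ρ (x i) (x (i + 1))
        ≤ (∑ i ∈ Finset.range n, d (x i) (x (i + 1))) / c₁ := by
      rw [Finset.sum_div]
      exact Finset.sum_le_sum fun i _ => h2 i
    have hsum0 : 0 ≤ ∑ i ∈ Finset.range n, d (x i) (x (i + 1)) :=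
      Finset.sum_nonneg fun i _ => hnonneg _ _
    calc d (x 0) (x n) ≤ c₂ * ρ (x 0) (x n) := (hle _ _).2
      _ ≤ c₂ * ((∑ i ∈ Finset.range n, d (x i) (x (i + 1))) / c₁) := by
          have := h1.trans h3
          exact mul_le_mul_of_nonneg_left this hc₂.le
      _ = (c₂ / c₁) * ∑ i ∈ Finset.range n, d (x i) (x (i + 1)) := by ring
      _ ≤ max 1 (c₂ / c₁) * ∑ i ∈ Finset.range n, d (x i) (x (i + 1)) :=
          mul_le_mul_of_nonneg_right (le_max_right _ _) hsum0
  · rintro ⟨s, hs, hpoly⟩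
    have hs0 : (0:ℝ) < s := lt_of_lt_of_le one_pos hs
    set S : X → X → Set ℝ := fun x y =>
      { t | ∃ n : ℕ, 1 ≤ n ∧ ∃ f : ℕ → X, f 0 = x ∧ f n = y ∧
          t = ∑ i ∈ Finset.range n, d (f i) (f (i + 1)) } with hS
    have hmem : ∀ x y, d x y ∈ S x y := by
      intro x y
      refine ⟨1, le_refl 1, fun i => if i = 0 then x else y, by simp, by simp, by simp⟩
    have hne : ∀ x y, (S x y).Nonempty := fun x y => ⟨d x y, hmem x y⟩
    have hlow : ∀ x y, ∀ t ∈ S x y, d x y / s ≤ t := by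
      rintro x y t ⟨n, hn, f, hf0, hfn, rfl⟩
      rw [div_le_iff₀ hs0, mul_comm]
      have := hpoly n hn f
      rw [hf0, hfn] at this
      exact this
    have hbdd : ∀ x y, BddBelow (S x y) := fun x y => ⟨d x y / s, hlow x y⟩
    set ρ : X → X → ℝ := fun x y => sInf (S x y) with hρ
    have hρle : ∀ x y, ρ x y ≤ d x y := fun x y => csInf_le (hbdd x y) (hmem x y)
    have hρge : ∀ x y, d x y / s ≤ ρ x y := fun x y => le_csInf (hne x y) (hlow x y)
    have hρ0 : ∀ x y, 0 ≤ ρ x y := by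
      intro x y
      have := hρge x y
      have h0 : 0 ≤ d x y / s := div_nonneg (hnonneg x y) hs0.le
      linarith
    -- symmetry of the chain sets
    have hsub : ∀ x y, S x y ⊆ S y x := by
      rintro x y t ⟨n, hn, f, hf0, hfn, rfl⟩
      refine ⟨n, hn, fun i => f (n - i), by simp [hfn], by simp [hf0], ?_⟩
      rw [← Finset.sum_range_reflect (fun j => d (f j) (f (j + 1))) n]
      refine Finset.sum_congr rfl fun i hi => ?_
      have hi' : i < n := Finset.mem_range.1 hi
      have e1 : n - (i + 1) = n - 1 - i := by omega
      have e2 : n - i = n - 1 - i + 1 := by omega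
      show d (f (n - 1 - i)) (f (n - 1 - i + 1)) = d (f (n - i)) (f (n - (i + 1)))
      rw [e1, e2, hsymm]
    have hSsymm : ∀ x y, S x y = S y x := fun x y =>
      Set.Subset.antisymm (hsub x y) (hsub y x)
    -- concatenation
    have hcat : ∀ x y z t₁ t₂, t₁ ∈ S x z → t₂ ∈ S z y → t₁ + t₂ ∈ S x y := by
      rintro x y z t₁ t₂ ⟨n, hn, f, hf0, hfn, rfl⟩ ⟨m, hm, g, hg0, hgm, rfl⟩
      refine ⟨n + m, by omega, fun i => if i < n then f i else g (i - n),
        by simp [hf0, show 0 < n by omega], by simp [hgm], ?_⟩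
      rw [Finset.sum_range_add]
      congr 1
      · refine Finset.sum_congr rfl fun i hi => ?_
        have hi' : i < n := Finset.mem_range.1 hi
        by_cases h' : i + 1 < n
        · simp [hi', h']
        · have : i + 1 = n := by omega
          simp [hi', h', this, hg0, hfn]
      · refine Finset.sum_congr rfl fun i hi => ?_
        have e1 : ¬ n + i < n := by omega
        have e2 : ¬ n + i + 1 < n := by omega
        have e3 : n + i - n = i := by omega
        have e4 : n + i + 1 - n = i + 1 := by omega
        simp [e1, e2, e3, e4]
    have hρtri : ∀ x y z, ρ x y ≤ ρ x z + ρ z y := by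
      intro x y z
      have key : ∀ t₂ ∈ S z y, ρ x y - t₂ ≤ ρ x z := by
        intro t₂ ht₂
        refine le_csInf (hne x z) fun t₁ ht₁ => ?_
        have := csInf_le (hbdd x y) (hcat x y z t₁ t₂ ht₁ ht₂)
        linarith
      have : ρ x y - ρ x z ≤ ρ z y := by
        refine le_csInf (hne z y) fun t₂ ht₂ => ?_
        have := key t₂ ht₂
        linarith
      linarith
    refine ⟨ρ, hρ0, ?_, ?_, hρtri, 1, one_pos, s, hs0, fun x y => ?_⟩
    · intro x y
      constructor
      · intro h
        have := hρge x y
        rw [h] at this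
        have hd : d x y ≤ 0 := by
          rw [div_le_iff₀ hs0] at this
          simpa using this
        exact (heq x y).1 (le_antisymm hd (hnonneg x y))
      · rintro rfl
        have h1 := hρle x x
        rw [(heq x x).2 rfl] at h1
        exact le_antisymm h1 (hρ0 x x)
    · intro x y
      show sInf (S x y) = sInf (S y x)
      rw [hSsymm]
    · refine ⟨by simpa using hρle x y, ?_⟩
      have := hρge x y
      rw [div_le_iff₀ hs0, mul_comm] at this
      exact this
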